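/- arXiv:1407.3619 — 2 statements merged into one kernel-verified Lean document; each statement's English description precedes it below -/
import Mathlib

section
/- Let X and X̃ be real d×n matrices, let r ≥ 1, and suppose ‖X − X̃‖₂ ≤ ε·‖X‖_F for some ε ≥ 0. Then ‖X − X̃_r‖_F ≤ ‖X − X_r‖_F + ‖X‖_F·( sqrt(r)·ε + 2·r^{1/4}·sqrt(ε) ), where M_r denotes the best rank-r approximation of a matrix M. -/
open Matrix

/-- Spectral (ℓ2 operator) norm of a matrix. -/
noncomputable def specNorm {p q : ℕ} (M : Matrix (Fin p) (Fin q) ℝ) : ℝ :=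
  ‖(Matrix.toEuclideanLin M).toContinuousLinearMap‖

/-- Frobenius norm of a matrix. -/
noncomputable def frobNorm {p q : ℕ} (M : Matrix (Fin p) (Fin q) ℝ) : ℝ :=
  Real.sqrt (∑ i, ∑ j, M i j ^ 2)

/-- The d×n rectangular "diagonal" matrix with entries s 0 ≥ s 1 ≥ … on the diagonal. -/
def diagDec (d n : ℕ) (s : ℕ → ℝ) : Matrix (Fin d) (Fin n) ℝ :=
  Matrix.of fun i j => if (i : ℕ) = (j : ℕ) then s i else 0

/-- The same diagonal matrix truncated to its first k diagonal entries. -/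
def diagTrunc (d n : ℕ) (s : ℕ → ℝ) (k : ℕ) : Matrix (Fin d) (Fin n) ℝ :=
  Matrix.of fun i j => if (i : ℕ) = (j : ℕ) ∧ (i : ℕ) < k then s i else 0

/-- A singular value decomposition M = U·Σ·Vᵀ of a d×n real matrix M: U and V are orthogonal
and the diagonal entries of Σ are the singular values σ₁ ≥ σ₂ ≥ … ≥ 0.  Every real matrix
admits such a decomposition. -/
structure SVDData (d n : ℕ) (M : Matrix (Fin d) (Fin n) ℝ) where
  U : Matrix (Fin d) (Fin d) ℝ
  V : Matrix (Fin n) (Fin n) ℝ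
  s : ℕ → ℝ
  orthU : Uᵀ * U = 1
  orthV : Vᵀ * V = 1
  nonneg : ∀ i, 0 ≤ s i
  anti : ∀ i j, i ≤ j → s j ≤ s i
  eq : M = U * diagDec d n s * Vᵀ

/-- The best rank-k approximation M_k of M: the truncated SVD keeping the top k singular
values. -/
def SVDData.trunc {d n : ℕ} {M : Matrix (Fin d) (Fin n) ℝ} (sd : SVDData d n M) (k : ℕ) :
    Matrix (Fin d) (Fin n) ℝ :=
  sd.U * diagTrunc d n sd.s k * sd.Vᵀ

/-! ### Auxiliary definitions and lemmas -/

/-- Sum of squares of the entries (squared Frobenius norm). -/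
def sumsq {p q : ℕ} (M : Matrix (Fin p) (Fin q) ℝ) : ℝ := ∑ i, ∑ j, M i j ^ 2

/-- Sum of squares of a row. -/
def rowsq {p q : ℕ} (M : Matrix (Fin p) (Fin q) ℝ) (i : Fin p) : ℝ := ∑ j, M i j ^ 2

lemma sumsq_nonneg {p q : ℕ} (M : Matrix (Fin p) (Fin q) ℝ) : 0 ≤ sumsq M := by
  apply Finset.sum_nonneg; intros; apply Finset.sum_nonneg; intros; positivity

lemma rowsq_nonneg {p q : ℕ} (M : Matrix (Fin p) (Fin q) ℝ) (i : Fin p) : 0 ≤ rowsq M i := by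
  apply Finset.sum_nonneg; intros; positivity

lemma sumsq_eq_sum_rowsq {p q : ℕ} (M : Matrix (Fin p) (Fin q) ℝ) :
    sumsq M = ∑ i, rowsq M i := rfl

lemma frobNorm_eq_sqrt {p q : ℕ} (M : Matrix (Fin p) (Fin q) ℝ) :
    frobNorm M = Real.sqrt (sumsq M) := rfl

lemma frobNorm_nonneg {p q : ℕ} (M : Matrix (Fin p) (Fin q) ℝ) : 0 ≤ frobNorm M :=
  Real.sqrt_nonneg _

lemma frobNorm_sq {p q : ℕ} (M : Matrix (Fin p) (Fin q) ℝ) :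
    frobNorm M ^ 2 = sumsq M := Real.sq_sqrt (sumsq_nonneg M)

lemma sumsq_eq_trace {p q : ℕ} (M : Matrix (Fin p) (Fin q) ℝ) :
    sumsq M = Matrix.trace (Mᵀ * M) := by
  rw [Matrix.trace, sumsq, Finset.sum_comm]
  congr 1; ext j
  simp [Matrix.diag, Matrix.mul_apply, pow_two]

lemma sumsq_mul_left {p q : ℕ} (W : Matrix (Fin p) (Fin p) ℝ) (hW : Wᵀ * W = 1)
    (M : Matrix (Fin p) (Fin q) ℝ) : sumsq (W * M) = sumsq M := by
  rw [sumsq_eq_trace, sumsq_eq_trace, Matrix.transpose_mul, Matrix.mul_assoc,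
    ← Matrix.mul_assoc Wᵀ, hW, Matrix.one_mul]

lemma sumsq_mul_right {p q : ℕ} (W : Matrix (Fin q) (Fin q) ℝ) (hW : W * Wᵀ = 1)
    (M : Matrix (Fin p) (Fin q) ℝ) : sumsq (M * W) = sumsq M := by
  rw [sumsq_eq_trace, sumsq_eq_trace, Matrix.transpose_mul, Matrix.mul_assoc,
    Matrix.trace_mul_comm Wᵀ, Matrix.mul_assoc, Matrix.mul_assoc, hW, Matrix.mul_one]

lemma rowsq_eq_diag {p q : ℕ} (M : Matrix (Fin p) (Fin q) ℝ) (i : Fin p) :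
    rowsq M i = (M * Mᵀ) i i := by
  simp [rowsq, Matrix.mul_apply, pow_two]

lemma rowsq_mul_right {p q : ℕ} (W : Matrix (Fin q) (Fin q) ℝ) (hW : W * Wᵀ = 1)
    (M : Matrix (Fin p) (Fin q) ℝ) (i : Fin p) : rowsq (M * W) i = rowsq M i := by
  rw [rowsq_eq_diag, rowsq_eq_diag, Matrix.transpose_mul, Matrix.mul_assoc,
    ← Matrix.mul_assoc W, hW, Matrix.one_mul]

lemma specNorm_nonneg {p q : ℕ} (M : Matrix (Fin p) (Fin q) ℝ) : 0 ≤ specNorm M :=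
  norm_nonneg _

lemma specNorm_transpose {p q : ℕ} (M : Matrix (Fin p) (Fin q) ℝ) :
    specNorm Mᵀ = specNorm M := by
  have h1 : Mᵀ = Mᴴ := by ext i j; simp [Matrix.conjTranspose_apply]
  rw [specNorm, specNorm, h1, Matrix.toEuclideanLin_conjTranspose_eq_adjoint,
    LinearMap.adjoint_toContinuousLinearMap]
  exact LinearIsometryEquiv.norm_map _ _

lemma mulVec_sumsq_le {p q : ℕ} (M : Matrix (Fin p) (Fin q) ℝ) (v : Fin q → ℝ) :
    ∑ i, (M *ᵥ v) i ^ 2 ≤ specNorm M ^ 2 * ∑ j, v j ^ 2 := by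
  have h := (Matrix.toEuclideanLin M).toContinuousLinearMap.le_opNorm
    ((WithLp.equiv 2 (Fin q → ℝ)).symm v)
  rw [LinearMap.coe_toContinuousLinearMap', WithLp.equiv_symm_apply, Matrix.toEuclideanLin_apply_piLp_toLp,
    EuclideanSpace.norm_eq, EuclideanSpace.norm_eq] at h
  simp only [PiLp.toLp_apply, Real.norm_eq_abs, sq_abs] at h
  calc ∑ i, (M *ᵥ v) i ^ 2 = Real.sqrt (∑ i, (M *ᵥ v) i ^ 2) ^ 2 :=
        (Real.sq_sqrt (by positivity)).symm
    _ ≤ (specNorm M * Real.sqrt (∑ j, v j ^ 2)) ^ 2 :=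
        pow_le_pow_left₀ (Real.sqrt_nonneg _) h 2
    _ = specNorm M ^ 2 * ∑ j, v j ^ 2 := by
        rw [mul_pow, Real.sq_sqrt (by positivity)]

lemma rowsq_orth_spec {d n : ℕ} (U : Matrix (Fin d) (Fin d) ℝ) (hU : Uᵀ * U = 1)
    (M : Matrix (Fin d) (Fin n) ℝ) (i : Fin d) : rowsq (Uᵀ * M) i ≤ specNorm M ^ 2 := by
  have key : rowsq (Uᵀ * M) i = ∑ j, (Mᵀ *ᵥ (fun k => U k i)) j ^ 2 := by
    unfold rowsq; congr 1; ext j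
    congr 1
    simp [Matrix.mul_apply, Matrix.mulVec, dotProduct, mul_comm]
  rw [key]
  calc _ ≤ specNorm Mᵀ ^ 2 * ∑ k, U k i ^ 2 := mulVec_sumsq_le _ _
    _ = specNorm M ^ 2 := by
        have h2 : ∑ k, U k i ^ 2 = (Uᵀ * U) i i := by
          simp [Matrix.mul_apply, pow_two]
        rw [specNorm_transpose, h2, hU]; simp

lemma sum_ind {d : ℕ} (r : ℕ) (c : ℝ) :
    ∑ i : Fin d, (if (i : ℕ) < r then c else 0) = (min r d : ℕ) * c := by
  rw [Fin.sum_univ_eq_sum_range (fun i => if i < r then c else 0) d]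
  induction d with
  | zero => simp
  | succ d ih =>
      rw [Finset.sum_range_succ, ih]
      by_cases h : d < r
      · have h1 : min r (d+1) = d + 1 := by omega
        have h2 : min r d = d := by omega
        simp [h, h1, h2]; ring
      · have h1 : min r (d+1) = min r d := by omega
        simp [h, h1]

lemma majorize {d : ℕ} (r : ℕ) (a q : Fin d → ℝ) (ha0 : ∀ i, 0 ≤ a i)
    (hanti : ∀ i j : Fin d, i ≤ j → a j ≤ a i)
    (hq0 : ∀ i, 0 ≤ q i) (hq1 : ∀ i, q i ≤ 1) (hqs : ∑ i, q i ≤ r) :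
    ∑ i, a i * q i ≤ ∑ i : Fin d, if (i : ℕ) < r then a i else 0 := by
  by_cases hrd : r < d
  · set c := a ⟨r, hrd⟩ with hc
    have hc0 : 0 ≤ c := ha0 _
    have hle : ∀ i : Fin d, a i * q i ≤ c * q i + (if (i : ℕ) < r then a i - c else 0) := by
      intro i
      by_cases hi : (i : ℕ) < r
      · simp only [hi, if_true]
        have hac : c ≤ a i := hanti i ⟨r, hrd⟩ (by simp [Fin.le_def]; omega)
        nlinarith [hq1 i, hq0 i]
      · simp only [hi, if_false, add_zero]
        have hac : a i ≤ c := hanti ⟨r, hrd⟩ i (by simp [Fin.le_def]; omega)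
        nlinarith [hq0 i]
    have hmin : (min r d : ℕ) = r := by omega
    calc ∑ i, a i * q i ≤ ∑ i, (c * q i + (if (i : ℕ) < r then a i - c else 0)) :=
          Finset.sum_le_sum (fun i _ => hle i)
      _ = c * (∑ i, q i) + ∑ i : Fin d, (if (i : ℕ) < r then a i - c else 0) := by
          rw [Finset.sum_add_distrib, Finset.mul_sum]
      _ ≤ c * r + ∑ i : Fin d, (if (i : ℕ) < r then a i - c else 0) := by
          have := mul_le_mul_of_nonneg_left hqs hc0
          linarith
      _ = c * r + ((∑ i : Fin d, (if (i : ℕ) < r then a i else 0)) -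
            ∑ i : Fin d, (if (i : ℕ) < r then c else 0)) := by
          rw [← Finset.sum_sub_distrib]
          congr 1; apply Finset.sum_congr rfl; intro i _
          by_cases hi : (i : ℕ) < r <;> simp [hi]
      _ ≤ ∑ i : Fin d, if (i : ℕ) < r then a i else 0 := by
          rw [sum_ind, hmin]; linarith
  · have hall : ∀ i : Fin d, (i : ℕ) < r := fun i => lt_of_lt_of_le i.isLt (le_of_not_gt hrd)
    calc ∑ i, a i * q i ≤ ∑ i, a i := by
          apply Finset.sum_le_sum; intro i _
          nlinarith [hq0 i, hq1 i, ha0 i]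
      _ = ∑ i : Fin d, if (i : ℕ) < r then a i else 0 := by
          apply Finset.sum_congr rfl; intro i _; simp [hall i]

def projMat (d r : ℕ) : Matrix (Fin d) (Fin d) ℝ :=
  Matrix.of fun i j => if (i : ℕ) = (j : ℕ) ∧ (i : ℕ) < r then 1 else 0

lemma projMat_mul {d n r : ℕ} (N : Matrix (Fin d) (Fin n) ℝ) :
    projMat d r * N =
      Matrix.of fun (i : Fin d) (j : Fin n) => if (i : ℕ) < r then N i j else 0 := by
  ext i j
  rw [Matrix.mul_apply]
  rw [Finset.sum_eq_single i (fun k _ hk => by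
    simp only [projMat, Matrix.of_apply]
    have : ¬((i : ℕ) = (k : ℕ) ∧ (i : ℕ) < r) := by
      intro hh; exact hk (Fin.ext hh.1.symm)
    simp [this]) (by simp)]
  simp only [projMat, Matrix.of_apply]
  by_cases hi : (i : ℕ) < r <;> simp [hi]

lemma projMat_transpose {d r : ℕ} : (projMat d r)ᵀ = projMat d r := by
  ext i j
  simp only [projMat, Matrix.transpose_apply, Matrix.of_apply]
  by_cases h : (i : ℕ) = (j : ℕ)
  · simp [h]
  · simp [h, Ne.symm h]

lemma projMat_idem {d r : ℕ} : projMat d r * projMat d r = projMat d r := by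
  rw [projMat_mul]
  ext i j
  simp only [projMat, Matrix.of_apply]
  by_cases hi : (i : ℕ) < r
  · simp [hi]
  · by_cases hj : (i : ℕ) = (j : ℕ)
    · have hjr : ¬((j : ℕ) < r) := by omega
      simp [hi, hj, hjr]
    · simp [hi, hj]

lemma projMat_mul_diagDec {d n r : ℕ} (s : ℕ → ℝ) :
    projMat d r * diagDec d n s = diagTrunc d n s r := by
  rw [projMat_mul]
  ext i j
  simp only [diagDec, diagTrunc, Matrix.of_apply]
  by_cases hi : (i : ℕ) < r <;> by_cases hj : (i : ℕ) = (j : ℕ) <;> simp [hi, hj]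

lemma projMat_trace {d r : ℕ} : Matrix.trace (projMat d r) = (min r d : ℕ) := by
  rw [Matrix.trace]
  have h1 : ∀ i : Fin d, Matrix.diag (projMat d r) i = if (i : ℕ) < r then (1:ℝ) else 0 := by
    intro i; simp [Matrix.diag, projMat]
  rw [Finset.sum_congr rfl (fun i _ => h1 i), sum_ind r (1:ℝ)]
  simp

lemma diagDec_mul_self_transpose {d n : ℕ} (s : ℕ → ℝ) :
    diagDec d n s * (diagDec d n s)ᵀ =
      Matrix.of (fun i k : Fin d => if (i : ℕ) = (k : ℕ) ∧ (i : ℕ) < n then s i ^ 2 else 0) := by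
  ext i k
  rw [Matrix.mul_apply]
  simp only [Matrix.transpose_apply, diagDec, Matrix.of_apply]
  by_cases hin : (i : ℕ) < n
  · rw [Finset.sum_eq_single (⟨(i : ℕ), hin⟩ : Fin n) (fun j _ hj => by
      have : ¬((i : ℕ) = (j : ℕ)) := by
        intro hh; exact hj (by apply Fin.ext; simp [← hh])
      simp [this]) (by simp)]
    by_cases hik : (i : ℕ) = (k : ℕ)
    · have hkn : (k : ℕ) < n := by omega
      simp [hik, hkn, pow_two]
    · have h2 : ¬((k : ℕ) = (i : ℕ)) := fun h => hik h.symm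
      simp [hik, h2]
  · have hz : ∀ j : Fin n,
        (if (i:ℕ) = (j:ℕ) then s i else 0) * (if (k:ℕ) = (j:ℕ) then s k else 0) = 0 := by
      intro j
      have : ¬((i : ℕ) = (j : ℕ)) := by omega
      simp [this]
    rw [Finset.sum_congr rfl (fun j _ => hz j)]
    simp [hin]

lemma trace_mul_diagLike {d : ℕ} (Q D : Matrix (Fin d) (Fin d) ℝ)
    (hD : ∀ i k, i ≠ k → D i k = 0) :
    Matrix.trace (Q * D) = ∑ i, Q i i * D i i := by
  rw [Matrix.trace]
  apply Finset.sum_congr rfl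
  intro i _
  rw [Matrix.diag, Matrix.mul_apply]
  exact Finset.sum_eq_single i (fun k _ hk => by rw [hD k i hk, mul_zero]) (by simp)

lemma frobNorm_add_le {p q : ℕ} (M N : Matrix (Fin p) (Fin q) ℝ) :
    frobNorm (M + N) ≤ frobNorm M + frobNorm N := by
  have emb : ∀ A : Matrix (Fin p) (Fin q) ℝ, frobNorm A =
      ‖(WithLp.equiv 2 (Fin p × Fin q → ℝ)).symm (fun ij => A ij.1 ij.2)‖ := by
    intro A
    rw [EuclideanSpace.norm_eq, frobNorm]
    congr 1
    rw [show (∑ i : Fin p × Fin q,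
        ‖(WithLp.equiv 2 (Fin p × Fin q → ℝ)).symm (fun ij => A ij.1 ij.2) i‖ ^ 2)
        = ∑ i : Fin p × Fin q, A i.1 i.2 ^ 2 from
      Finset.sum_congr rfl (fun ij _ => by
        simp [WithLp.equiv_symm_apply, PiLp.toLp_apply, sq_abs])]
    rw [Fintype.sum_prod_type]
  rw [emb, emb, emb]
  have hadd : (WithLp.equiv 2 (Fin p × Fin q → ℝ)).symm (fun ij => (M + N) ij.1 ij.2) =
      (WithLp.equiv 2 (Fin p × Fin q → ℝ)).symm (fun ij => M ij.1 ij.2) +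
      (WithLp.equiv 2 (Fin p × Fin q → ℝ)).symm (fun ij => N ij.1 ij.2) := by
    rfl
  rw [hadd]
  exact norm_add_le _ _

lemma frobNorm_neg {p q : ℕ} (M : Matrix (Fin p) (Fin q) ℝ) :
    frobNorm (-M) = frobNorm M := by
  unfold frobNorm; congr 1
  apply Finset.sum_congr rfl; intro i _
  apply Finset.sum_congr rfl; intro j _
  simp
lemma conj_cancel {d n : ℕ} (U : Matrix (Fin d) (Fin d) ℝ) (hU : Uᵀ * U = 1)
    (V : Matrix (Fin n) (Fin n) ℝ) (hV : Vᵀ * V = 1) (M : Matrix (Fin d) (Fin n) ℝ) :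
    Uᵀ * (U * M * Vᵀ) * V = M := by
  simp only [Matrix.mul_assoc]
  rw [hV, Matrix.mul_one, ← Matrix.mul_assoc, hU, Matrix.one_mul]

lemma sumsq_conj {d n : ℕ} (U : Matrix (Fin d) (Fin d) ℝ) (hU : Uᵀ * U = 1)
    (V : Matrix (Fin n) (Fin n) ℝ) (hV : Vᵀ * V = 1) (M : Matrix (Fin d) (Fin n) ℝ) :
    sumsq (U * M * Vᵀ) = sumsq M := by
  rw [sumsq_mul_right Vᵀ (by rw [Matrix.transpose_transpose]; exact hV),
    sumsq_mul_left U hU]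

lemma sum_if_le_of_bound {d : ℕ} (r : ℕ) (f : Fin d → ℝ) (c : ℝ) (hc : 0 ≤ c)
    (hf0 : ∀ i, 0 ≤ f i) (hf : ∀ i, f i ≤ c) :
    ∑ i : Fin d, (if (i : ℕ) < r then f i else 0) ≤ r * c := by
  calc ∑ i : Fin d, (if (i : ℕ) < r then f i else 0)
      ≤ ∑ i : Fin d, (if (i : ℕ) < r then c else 0) := by
        apply Finset.sum_le_sum; intro i _
        by_cases hi : (i : ℕ) < r <;> simp [hi, hf i]
    _ = (min r d : ℕ) * c := sum_ind r c
    _ ≤ r * c := by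
        apply mul_le_mul_of_nonneg_right _ hc
        exact_mod_cast Nat.cast_le.mpr (min_le_left r d)

lemma sumsq_rowTrunc {d n : ℕ} (r : ℕ) (N : Matrix (Fin d) (Fin n) ℝ) :
    sumsq (Matrix.of fun (i : Fin d) (j : Fin n) => if (i : ℕ) < r then N i j else 0)
      = ∑ i : Fin d, (if (i : ℕ) < r then rowsq N i else 0) := by
  rw [sumsq_eq_sum_rowsq]
  apply Finset.sum_congr rfl; intro i _
  by_cases hi : (i : ℕ) < r <;> simp [rowsq, hi]

lemma rowsq_diagTrunc {d n : ℕ} (s : ℕ → ℝ) (k : ℕ) (i : Fin d) :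
    rowsq (diagTrunc d n s k) i =
      if (i : ℕ) < k ∧ (i : ℕ) < n then s i ^ 2 else 0 := by
  unfold rowsq diagTrunc
  by_cases hin : (i : ℕ) < n
  · rw [Finset.sum_eq_single (⟨(i : ℕ), hin⟩ : Fin n) (fun j _ hj => by
      have hne : ¬((i : ℕ) = (j : ℕ)) := by
        intro hh; exact hj (by apply Fin.ext; simp [← hh])
      simp [hne]) (by simp)]
    by_cases hik : (i : ℕ) < k <;> simp [hik, hin]
  · have hz : ∀ j : Fin n,
        ((Matrix.of fun (i : Fin d) (j : Fin n) =>
          if (i : ℕ) = (j : ℕ) ∧ (i : ℕ) < k then s i else 0) i j) ^ 2 = 0 := by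
      intro j
      have : ¬((i : ℕ) = (j : ℕ)) := by omega
      simp [this]
    rw [Finset.sum_congr rfl (fun j _ => hz j)]
    simp [hin]

set_option maxHeartbeats 4000000 in
/-- Spectral-to-Frobenius error translation: if X and X̃ are real d×n matrices, r ≥ 1, and
‖X − X̃‖₂ ≤ ε·‖X‖_F with ε ≥ 0, then (M_r denoting the truncated SVD of M)
‖X − X̃_r‖_F ≤ ‖X − X_r‖_F + ‖X‖_F·(sqrt(r)·ε + 2·r^{1/4}·sqrt(ε)). -/
theorem spectral_to_frobenius_translation
    {d n : ℕ} (X Xt : Matrix (Fin d) (Fin n) ℝ) (r : ℕ) (hr : 1 ≤ r)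
    (ε : ℝ) (hε : 0 ≤ ε) (h : specNorm (X - Xt) ≤ ε * frobNorm X)
    (sX : SVDData d n X) (sXt : SVDData d n Xt) :
    frobNorm (X - sXt.trunc r) ≤ frobNorm (X - sX.trunc r) +
      frobNorm X * (Real.sqrt r * ε + 2 * (r : ℝ) ^ ((1 : ℝ) / 4) * Real.sqrt ε) := by
  obtain ⟨U, V, st, hU, hV, hstnn, hstanti, hXteq⟩ := sXt
  obtain ⟨W, Z, t, hW, hZ, htnn, htanti, hXeq⟩ := sX
  simp only [SVDData.trunc] at *
  have hUU : U * Uᵀ = 1 := mul_eq_one_comm.mp hU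
  have hVV : V * Vᵀ = 1 := mul_eq_one_comm.mp hV
  have hWW : W * Wᵀ = 1 := mul_eq_one_comm.mp hW
  have hZZ : Z * Zᵀ = 1 := mul_eq_one_comm.mp hZ
  set E : Matrix (Fin d) (Fin n) ℝ := X - Xt with hEdef
  set F : ℝ := frobNorm X with hFdef
  have hF0 : 0 ≤ F := frobNorm_nonneg X
  set e : ℝ := specNorm E with hedef
  have he0 : 0 ≤ e := specNorm_nonneg E
  have heF : e ≤ ε * F := h
  set Sg : Matrix (Fin d) (Fin n) ℝ := diagDec d n st with hSgdef
  set Sgr : Matrix (Fin d) (Fin n) ℝ := diagTrunc d n st r with hSgrdef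
  set Sx : Matrix (Fin d) (Fin n) ℝ := diagDec d n t with hSxdef
  set Sxr : Matrix (Fin d) (Fin n) ℝ := diagTrunc d n t r with hSxrdef
  set A : Matrix (Fin d) (Fin n) ℝ := Uᵀ * X * V with hAdef
  set B : Matrix (Fin d) (Fin n) ℝ := Uᵀ * E * V with hBdef
  set se : ℝ := Real.sqrt r * e with hsedef
  have hse0 : 0 ≤ se := by positivity
  -- Xt in its own frame
  have hXtdiag : Uᵀ * Xt * V = Sg := by
    rw [hXteq]; exact conj_cancel U hU V hV Sg
  have hXsplit : X = Xt + E := by rw [hEdef]; abel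
  have hAB : A = Sg + B := by
    rw [hAdef, hBdef, ← hXtdiag]
    conv_lhs => rw [hXsplit]
    rw [Matrix.mul_add, Matrix.add_mul]
  have hkey : X - U * Sgr * Vᵀ = U * (A - Sgr) * Vᵀ := by
    have hcc : U * (Uᵀ * X * V) * Vᵀ = X := by
      have h1 := conj_cancel Uᵀ (by rw [Matrix.transpose_transpose]; exact hUU)
        Vᵀ (by rw [Matrix.transpose_transpose]; exact hVV) X
      simpa [Matrix.transpose_transpose] using h1
    rw [Matrix.mul_sub, Matrix.sub_mul, hAdef, hcc]
  -- entries of A - Sgr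
  have hentry : ∀ (i : Fin d) (j : Fin n),
      (A - Sgr) i j = if (i : ℕ) < r then B i j else A i j := by
    intro i j
    by_cases hi : (i : ℕ) < r
    · have h1 : Sgr i j = Sg i j := by
        simp only [hSgrdef, hSgdef, diagTrunc, diagDec, Matrix.of_apply]
        by_cases hij : (i : ℕ) = (j : ℕ)
        · rw [if_pos ⟨hij, hi⟩, if_pos hij]
        · rw [if_neg (fun hh => hij hh.1), if_neg hij]
      rw [Matrix.sub_apply, h1, hAB, Matrix.add_apply, if_pos hi]; ring
    · have h1 : Sgr i j = 0 := by
        simp only [hSgrdef, diagTrunc, Matrix.of_apply]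
        simp [hi]
      rw [Matrix.sub_apply, h1, if_neg hi, sub_zero]
  -- split the sum of squares by rows
  have hsplit : sumsq (A - Sgr) =
      (∑ i : Fin d, if (i : ℕ) < r then rowsq B i else 0) +
      (∑ i : Fin d, if (i : ℕ) < r then 0 else rowsq A i) := by
    rw [sumsq_eq_sum_rowsq, ← Finset.sum_add_distrib]
    apply Finset.sum_congr rfl; intro i _
    by_cases hi : (i : ℕ) < r
    · simp only [hi, if_true, add_zero]
      unfold rowsq
      apply Finset.sum_congr rfl; intro j _
      rw [hentry i j, if_pos hi]
    · simp only [hi, if_false, zero_add]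
      unfold rowsq
      apply Finset.sum_congr rfl; intro j _
      rw [hentry i j, if_neg hi]
  -- T1 bound
  have hrowB : ∀ i, rowsq B i ≤ e ^ 2 := by
    intro i
    rw [hBdef, rowsq_mul_right V hVV (Uᵀ * E) i]
    exact rowsq_orth_spec U hU E i
  have hT1 : (∑ i : Fin d, if (i : ℕ) < r then rowsq B i else 0) ≤ r * e ^ 2 :=
    sum_if_le_of_bound r _ _ (by positivity) (rowsq_nonneg B) hrowB
  -- truncated-rows matrices
  set RTA : Matrix (Fin d) (Fin n) ℝ :=
    Matrix.of (fun (i : Fin d) (j : Fin n) => if (i : ℕ) < r then A i j else 0) with hRTAdef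
  set RTB : Matrix (Fin d) (Fin n) ℝ :=
    Matrix.of (fun (i : Fin d) (j : Fin n) => if (i : ℕ) < r then B i j else 0) with hRTBdef
  have hsumsqRTA : sumsq RTA = ∑ i : Fin d, (if (i : ℕ) < r then rowsq A i else 0) :=
    sumsq_rowTrunc r A
  have hsumsqRTB : sumsq RTB = ∑ i : Fin d, (if (i : ℕ) < r then rowsq B i else 0) :=
    sumsq_rowTrunc r B
  have hRTAsplit : RTA = Sgr + RTB := by
    ext i j
    simp only [hRTAdef, hRTBdef, Matrix.of_apply, Matrix.add_apply]
    by_cases hi : (i : ℕ) < r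
    · simp only [hi, if_true]
      have h1 : Sgr i j = Sg i j := by
        simp only [hSgrdef, hSgdef, diagTrunc, diagDec, Matrix.of_apply]
        by_cases hij : (i : ℕ) = (j : ℕ)
        · rw [if_pos ⟨hij, hi⟩, if_pos hij]
        · rw [if_neg (fun hh => hij hh.1), if_neg hij]
      rw [h1, hAB, Matrix.add_apply]
    · simp only [hi, if_false]
      have h1 : Sgr i j = 0 := by
        simp only [hSgrdef, diagTrunc, Matrix.of_apply]; simp [hi]
      rw [h1, add_zero]
  set ρ : ℝ := frobNorm RTA with hρdef
  have hρ0 : 0 ≤ ρ := frobNorm_nonneg _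
  have hRTBle : frobNorm RTB ≤ se := by
    rw [frobNorm_eq_sqrt, hsumsqRTB]
    refine le_trans (Real.sqrt_le_sqrt hT1) ?_
    rw [show (r : ℝ) * e ^ 2 = (Real.sqrt r * e) ^ 2 by
      rw [mul_pow, Real.sq_sqrt (Nat.cast_nonneg r)]]
    rw [Real.sqrt_sq (by positivity)]
  have htri : frobNorm Sgr ≤ ρ + frobNorm RTB := by
    have h1 : Sgr = RTA + (-RTB) := by rw [hRTAsplit]; abel
    rw [h1]
    refine le_trans (frobNorm_add_le _ _) ?_
    rw [frobNorm_neg]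
  -- X-side quantities
  set K : ℝ := frobNorm Sxr with hKdef
  have hK0 : 0 ≤ K := frobNorm_nonneg _
  set G : ℝ := frobNorm (X - W * Sxr * Zᵀ) with hGdef
  have hG0 : 0 ≤ G := frobNorm_nonneg _
  have htruncK : frobNorm (W * Sxr * Zᵀ) = K := by
    rw [hKdef, frobNorm_eq_sqrt, frobNorm_eq_sqrt, sumsq_conj W hW Z hZ]
  have hsumsqX : sumsq X = sumsq Sx := by
    rw [hXeq, sumsq_conj W hW Z hZ]
  have hentryx : ∀ (i : Fin d) (j : Fin n),
      (Sx - Sxr) i j ^ 2 = Sx i j ^ 2 - Sxr i j ^ 2 := by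
    intro i j
    simp only [hSxdef, hSxrdef, diagDec, diagTrunc, Matrix.sub_apply, Matrix.of_apply]
    by_cases hij : (i : ℕ) = (j : ℕ)
    · by_cases hi : (i : ℕ) < r
      · rw [if_pos hij, if_pos ⟨hij, hi⟩]; ring
      · rw [if_pos hij, if_neg (fun hh => hi hh.2)]; ring
    · rw [if_neg hij, if_neg (fun hh => hij hh.1)]; ring
  have hG2 : G ^ 2 = F ^ 2 - K ^ 2 := by
    rw [hGdef, hKdef, hFdef, frobNorm_sq, frobNorm_sq, frobNorm_sq]
    have h1 : X - W * Sxr * Zᵀ = W * (Sx - Sxr) * Zᵀ := by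
      rw [Matrix.mul_sub, Matrix.sub_mul, ← hXeq]
    rw [h1, sumsq_conj W hW Z hZ, hsumsqX]
    unfold sumsq
    rw [← Finset.sum_sub_distrib]
    apply Finset.sum_congr rfl; intro i _
    rw [← Finset.sum_sub_distrib]
    exact Finset.sum_congr rfl (fun j _ => hentryx i j)
  have hKF : K ≤ F := by
    rw [hKdef, hFdef, frobNorm_eq_sqrt, frobNorm_eq_sqrt]
    apply Real.sqrt_le_sqrt
    rw [hsumsqX]
    unfold sumsq
    apply Finset.sum_le_sum; intro i _
    apply Finset.sum_le_sum; intro j _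
    simp only [hSxdef, hSxrdef, diagDec, diagTrunc, Matrix.of_apply]
    by_cases hij : (i : ℕ) = (j : ℕ)
    · by_cases hi : (i : ℕ) < r
      · rw [if_pos ⟨hij, hi⟩, if_pos hij]
      · rw [if_neg (fun hh => hi hh.2), if_pos hij]
        simpa using sq_nonneg (t ((i : ℕ)))
    · rw [if_neg (fun hh => hij hh.1), if_neg hij]
  -- the projector Q and its conjugate Q'
  set Q : Matrix (Fin d) (Fin d) ℝ := W * projMat d r * Wᵀ with hQdef
  have hQX : Q * X = W * Sxr * Zᵀ := by
    rw [hXeq, hQdef]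
    calc W * projMat d r * Wᵀ * (W * Sx * Zᵀ)
        = W * (projMat d r * ((Wᵀ * W) * (Sx * Zᵀ))) := by simp only [Matrix.mul_assoc]
      _ = W * (projMat d r * Sx) * Zᵀ := by
          rw [hW, Matrix.one_mul]
          simp only [Matrix.mul_assoc]
      _ = W * Sxr * Zᵀ := by
          rw [hSxdef, hSxrdef, projMat_mul_diagDec]
  have hQE : frobNorm (Q * E) ≤ se := by
    have h1 : Q * E = W * (projMat d r * (Wᵀ * E)) := by
      rw [hQdef]; simp only [Matrix.mul_assoc]
    rw [frobNorm_eq_sqrt, h1, sumsq_mul_left W hW, projMat_mul (Wᵀ * E), sumsq_rowTrunc]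
    have h2 : (∑ i : Fin d, if (i : ℕ) < r then rowsq (Wᵀ * E) i else 0) ≤ r * e ^ 2 :=
      sum_if_le_of_bound r _ _ (by positivity) (rowsq_nonneg _)
        (rowsq_orth_spec W hW E)
    refine le_trans (Real.sqrt_le_sqrt h2) ?_
    rw [show (r : ℝ) * e ^ 2 = (Real.sqrt r * e) ^ 2 by
      rw [mul_pow, Real.sq_sqrt (Nat.cast_nonneg r)]]
    rw [Real.sqrt_sq (by positivity)]
  have hQXtlow : K - se ≤ frobNorm (Q * Xt) := by
    have h1 : Q * X = Q * Xt + Q * E := by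
      rw [← Matrix.mul_add, ← hXsplit]
    have h2 : K = frobNorm (Q * X) := by rw [hQX, htruncK]
    have h3 := frobNorm_add_le (Q * Xt) (Q * E)
    rw [← h1, ← h2] at h3
    linarith only [h3, hQE]
  set Q' : Matrix (Fin d) (Fin d) ℝ := Uᵀ * Q * U with hQ'def
  have hQsym : Qᵀ = Q := by
    rw [hQdef, Matrix.transpose_mul, Matrix.transpose_mul, Matrix.transpose_transpose,
      projMat_transpose]
    simp only [Matrix.mul_assoc]
  have hQidem : Q * Q = Q := by
    rw [hQdef]
    calc W * projMat d r * Wᵀ * (W * projMat d r * Wᵀ)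
        = W * (projMat d r * ((Wᵀ * W) * (projMat d r * Wᵀ))) := by
          simp only [Matrix.mul_assoc]
      _ = W * (projMat d r * projMat d r) * Wᵀ := by
          rw [hW, Matrix.one_mul]; simp only [Matrix.mul_assoc]
      _ = W * projMat d r * Wᵀ := by rw [projMat_idem]
  have hQ'sym : Q'ᵀ = Q' := by
    rw [hQ'def, Matrix.transpose_mul, Matrix.transpose_mul, Matrix.transpose_transpose,
      hQsym]
    simp only [Matrix.mul_assoc]
  have hQ'idem : Q' * Q' = Q' := by
    rw [hQ'def]
    calc Uᵀ * Q * U * (Uᵀ * Q * U)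
        = Uᵀ * (Q * ((U * Uᵀ) * (Q * U))) := by simp only [Matrix.mul_assoc]
      _ = Uᵀ * (Q * Q) * U := by rw [hUU, Matrix.one_mul]; simp only [Matrix.mul_assoc]
      _ = Uᵀ * Q * U := by rw [hQidem]
  have hQ'symm : ∀ i k : Fin d, Q' k i = Q' i k := by
    intro i k
    have h1 : Q'ᵀ i k = Q' i k := by rw [hQ'sym]
    simpa [Matrix.transpose_apply] using h1
  have hdiag : ∀ i : Fin d, Q' i i = ∑ k, Q' i k ^ 2 := by
    intro i
    conv_lhs => rw [← hQ'idem]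
    rw [Matrix.mul_apply]
    apply Finset.sum_congr rfl; intro k _
    rw [hQ'symm i k, pow_two]
  have hq0 : ∀ i : Fin d, 0 ≤ Q' i i := by
    intro i; rw [hdiag i]; positivity
  have hq1 : ∀ i : Fin d, Q' i i ≤ 1 := by
    intro i
    have h1 : Q' i i ^ 2 ≤ Q' i i := by
      conv_rhs => rw [hdiag i]
      exact Finset.single_le_sum (f := fun k => Q' i k ^ 2) (fun k _ => sq_nonneg _)
        (Finset.mem_univ i)
    by_contra hgt
    push_neg at hgt
    have h2 : Q' i i * 1 < Q' i i * Q' i i :=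
      mul_lt_mul_of_pos_left hgt (lt_of_le_of_lt zero_le_one hgt)
    have h3 : Q' i i ^ 2 = Q' i i * Q' i i := sq (Q' i i)
    linarith only [h1, h2, h3]
  have hqs : ∑ i, Q' i i ≤ (r : ℝ) := by
    have h1 : ∑ i, Q' i i = Matrix.trace Q' := rfl
    have h2 : Matrix.trace Q' = Matrix.trace Q := by
      rw [hQ'def, Matrix.trace_mul_cycle, hUU, Matrix.one_mul]
    have h3 : Matrix.trace Q = ((min r d : ℕ) : ℝ) := by
      rw [hQdef, Matrix.trace_mul_cycle, hW, Matrix.one_mul, projMat_trace]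
    rw [h1, h2, h3]
    exact_mod_cast Nat.cast_le.mpr (min_le_left r d)
  have hmajor : frobNorm (Q * Xt) ≤ frobNorm Sgr := by
    rw [frobNorm_eq_sqrt, frobNorm_eq_sqrt]
    apply Real.sqrt_le_sqrt
    have h1 : Q * Xt = U * (Q' * Sg) * Vᵀ := by
      rw [hXteq, hQ'def]
      simp only [Matrix.mul_assoc]
      rw [← Matrix.mul_assoc U Uᵀ, hUU, Matrix.one_mul]
    rw [h1, sumsq_conj U hU V hV, sumsq_eq_trace]
    have h2 : (Q' * Sg)ᵀ * (Q' * Sg) = Sgᵀ * (Q' * Sg) := by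
      calc (Q' * Sg)ᵀ * (Q' * Sg) = Sgᵀ * (Q'ᵀ * (Q' * Sg)) := by
            rw [Matrix.transpose_mul]; simp only [Matrix.mul_assoc]
        _ = Sgᵀ * (Q' * Sg) := by rw [hQ'sym, ← Matrix.mul_assoc Q' Q' Sg, hQ'idem]
    rw [h2, Matrix.trace_mul_comm, Matrix.mul_assoc, hSgdef, diagDec_mul_self_transpose,
      trace_mul_diagLike Q' _ (fun i k hik => by
        have hne : ¬((i : ℕ) = (k : ℕ)) := fun hh => hik (Fin.ext hh)
        simp [hne])]
    have hSgr : sumsq Sgr = ∑ i : Fin d,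
        (if (i : ℕ) < r then (if (i : ℕ) < n then st i ^ 2 else 0) else 0) := by
      rw [hSgrdef, sumsq_eq_sum_rowsq]
      apply Finset.sum_congr rfl; intro i _
      rw [rowsq_diagTrunc]
      by_cases h1 : (i : ℕ) < r <;> by_cases h2 : (i : ℕ) < n <;> simp [h1, h2]
    rw [hSgr]
    have hmaj := majorize r (fun i : Fin d => if (i : ℕ) < n then st i ^ 2 else 0)
      (fun i => Q' i i)
      (fun i => by by_cases hin : (i : ℕ) < n <;> simp [hin] <;> positivity)
      (fun i j hij => by
        by_cases hjn : (j : ℕ) < n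
        · have hin : (i : ℕ) < n := lt_of_le_of_lt (Fin.le_def.mp hij) hjn
          simp only [hjn, hin, if_true]
          exact pow_le_pow_left₀ (hstnn _) (hstanti _ _ (Fin.le_def.mp hij)) 2
        · by_cases hin : (i : ℕ) < n <;> simp [hjn, hin] <;> positivity)
      hq0 hq1 hqs
    refine le_trans (le_of_eq ?_) hmaj
    apply Finset.sum_congr rfl; intro i _
    simp [mul_comm]
  have hρlow : K - 2 * se ≤ ρ := by
    linarith only [le_trans hQXtlow hmajor, htri, hRTBle]
  have hK2 : K ^ 2 ≤ ρ ^ 2 + 4 * se * F := by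
    by_cases hcase : K ≤ 2 * se
    · have e1 : K * K ≤ (2 * se) * K := mul_le_mul_of_nonneg_right hcase hK0
      have e2 : (2 * se) * K ≤ (2 * se) * F :=
        mul_le_mul_of_nonneg_left hKF (by linarith only [hse0])
      have e3 : 0 ≤ ρ ^ 2 := sq_nonneg ρ
      have e4 : K ^ 2 = K * K := sq K
      have e6 : 0 ≤ se * F := mul_nonneg hse0 hF0
      linarith only [e1, e2, e3, e4, e6]
    · push_neg at hcase
      have h4 : (K - 2 * se) ^ 2 ≤ ρ ^ 2 := by
        apply pow_le_pow_left₀ (by linarith only [hcase]) hρlow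
      have h4' : K ^ 2 - 4 * (se * K) + 4 * se ^ 2 ≤ ρ ^ 2 := by
        have hh : (K - 2 * se) ^ 2 = K ^ 2 - 4 * (se * K) + 4 * se ^ 2 := by ring
        linarith only [h4, hh.le, hh.ge]
      have e5 : se * K ≤ se * F := mul_le_mul_of_nonneg_left hKF hse0
      linarith only [h4', e5, sq_nonneg se]
  have hsumsqA : sumsq A = F ^ 2 := by
    rw [hFdef, frobNorm_sq, hAdef, sumsq_mul_right V hVV,
      sumsq_mul_left Uᵀ (by rw [Matrix.transpose_transpose]; exact hUU)]
  have hρ2 : ρ ^ 2 = ∑ i : Fin d, (if (i : ℕ) < r then rowsq A i else 0) := by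
    rw [hρdef, frobNorm_sq, hsumsqRTA]
  have hT2 : (∑ i : Fin d, if (i : ℕ) < r then 0 else rowsq A i) = F ^ 2 - ρ ^ 2 := by
    have h1 : F ^ 2 = (∑ i : Fin d, (if (i : ℕ) < r then rowsq A i else 0)) +
        (∑ i : Fin d, (if (i : ℕ) < r then 0 else rowsq A i)) := by
      rw [← hsumsqA, sumsq_eq_sum_rowsq, ← Finset.sum_add_distrib]
      apply Finset.sum_congr rfl; intro i _
      by_cases hi : (i : ℕ) < r <;> simp [hi]
    rw [hρ2]; linarith
  set b : ℝ := Real.sqrt r * ε * F with hbdef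
  set c : ℝ := 2 * (r : ℝ) ^ ((1 : ℝ) / 4) * Real.sqrt ε * F with hcdef
  have hb0 : 0 ≤ b := by positivity
  have hc0 : 0 ≤ c := by positivity
  have hb2 : (r : ℝ) * e ^ 2 ≤ b ^ 2 := by
    have h1 : e ^ 2 ≤ (ε * F) ^ 2 := pow_le_pow_left₀ he0 heF 2
    have h2 : b ^ 2 = (r : ℝ) * (ε * F) ^ 2 := by
      rw [hbdef, mul_pow, mul_pow, Real.sq_sqrt (Nat.cast_nonneg r)]; ring
    have h3 : (0:ℝ) ≤ (r : ℝ) := Nat.cast_nonneg r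
    calc (r : ℝ) * e ^ 2 ≤ (r : ℝ) * (ε * F) ^ 2 := mul_le_mul_of_nonneg_left h1 h3
      _ = b ^ 2 := h2.symm
  have hquarter : ((r : ℝ) ^ ((1 : ℝ) / 4)) ^ 2 = Real.sqrt r := by
    rw [← Real.rpow_natCast ((r : ℝ) ^ ((1 : ℝ) / 4)) 2,
      ← Real.rpow_mul (Nat.cast_nonneg r), Real.sqrt_eq_rpow]
    norm_num
  clear_value c b Q' Q G K ρ RTB RTA se B A Sxr Sx Sgr Sg e F E
  have hc2 : 4 * se * F ≤ c ^ 2 := by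
    have h1 : c ^ 2 = 4 * Real.sqrt r * ε * F ^ 2 := by
      rw [hcdef, mul_pow, mul_pow, mul_pow, hquarter, Real.sq_sqrt hε]; ring
    have h2 : se ≤ Real.sqrt r * (ε * F) := by
      rw [hsedef]
      exact mul_le_mul_of_nonneg_left heF (Real.sqrt_nonneg _)
    have h3 : 4 * se * F ≤ 4 * (Real.sqrt r * (ε * F)) * F := by
      have h4 := mul_le_mul_of_nonneg_right h2 hF0
      linarith
    calc 4 * se * F ≤ 4 * (Real.sqrt r * (ε * F)) * F := h3
      _ = c ^ 2 := by rw [h1]; ring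
  have hfinal : sumsq (A - Sgr) ≤ (G + b + c) ^ 2 := by
    rw [hsplit]
    have hexp : G ^ 2 + b ^ 2 + c ^ 2 ≤ (G + b + c) ^ 2 := by
      have hid : (G + b + c) ^ 2 =
          G ^ 2 + b ^ 2 + c ^ 2 + 2 * (G * b) + 2 * (G * c) + 2 * (b * c) := by ring
      rw [hid]
      linarith only [mul_nonneg hG0 hb0, mul_nonneg hG0 hc0, mul_nonneg hb0 hc0]
    linarith only [hT1, hT2, hK2, hb2, hc2, hG2, hexp]
  calc frobNorm (X - U * Sgr * Vᵀ)
      = Real.sqrt (sumsq (A - Sgr)) := by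
        rw [hkey, frobNorm_eq_sqrt, sumsq_conj U hU V hV]
    _ ≤ Real.sqrt ((G + b + c) ^ 2) := Real.sqrt_le_sqrt hfinal
    _ = G + b + c := Real.sqrt_sq (by positivity)
    _ = G + F * (Real.sqrt r * ε + 2 * (r : ℝ) ^ ((1 : ℝ) / 4) * Real.sqrt ε) := by
        rw [hbdef, hcdef]; ring
end

section
/- Let X = A + R be real d×n matrices where A has rank at most r, let X̃ be a real d×n matrix with ‖X̃ − X‖₂ ≤ ε·‖X‖_F for some ε ≥ 0, and let X̂ = X̃_r be the best rank-r approximation of X̃. Then ‖X̂ − A‖₂ ≤ 2‖R‖₂ + 2ε‖X‖_F and consequently ‖X̂ − A‖_F ≤ sqrt(8r)·( ‖R‖₂ + ε‖X‖_F ). -/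
open Matrix

section Auxiliary

open scoped Matrix.Norms.L2Operator

lemma specNorm_eq_l2norm {p q : ℕ} (M : Matrix (Fin p) (Fin q) ℝ) : specNorm M = ‖M‖ := rfl

lemma l2norm_one_le (p : ℕ) : ‖(1 : Matrix (Fin p) (Fin p) ℝ)‖ ≤ 1 := by
  rw [Matrix.cstar_norm_def, _root_.map_one]
  exact ContinuousLinearMap.norm_id_le

lemma l2norm_orth_le {p : ℕ} (U : Matrix (Fin p) (Fin p) ℝ) (hU : Uᵀ * U = 1) : ‖U‖ ≤ 1 := by
  have h1 : ‖Uᴴ * U‖ = ‖U‖ * ‖U‖ := Matrix.l2_opNorm_conjTranspose_mul_self U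
  rw [Matrix.conjTranspose_eq_transpose_of_trivial, hU] at h1
  have := l2norm_one_le p
  nlinarith [norm_nonneg U, norm_nonneg (1 : Matrix (Fin p) (Fin p) ℝ)]

lemma sum_eq_sum_castLE {m N : ℕ} (h : m ≤ N) (g : Fin N → ℝ)
    (hg : ∀ j : Fin N, ¬ (j : ℕ) < m → g j = 0) :
    ∑ j, g j = ∑ k : Fin m, g (Fin.castLE h k) := by
  have h2 : ∑ k : Fin m, g (Fin.castLE h k)
      = ∑ j ∈ Finset.univ.map (Fin.castLEEmb h), g j := by
    rw [Finset.sum_map]; rfl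
  rw [h2]
  refine (Finset.sum_subset (Finset.subset_univ _) ?_).symm
  intro j _ hj
  refine hg j fun hlt => hj ?_
  simp only [Finset.mem_map, Finset.mem_univ, true_and]
  exact ⟨⟨(j : ℕ), hlt⟩, by ext; simp⟩

lemma sum_le_sum_castLE {m N : ℕ} (h : m ≤ N) (g : Fin N → ℝ) (hg : ∀ j, 0 ≤ g j) :
    ∑ k : Fin m, g (Fin.castLE h k) ≤ ∑ j, g j := by
  have h2 : ∑ k : Fin m, g (Fin.castLE h k)
      = ∑ j ∈ Finset.univ.map (Fin.castLEEmb h), g j := by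
    rw [Finset.sum_map]; rfl
  rw [h2]
  exact Finset.sum_le_sum_of_subset_of_nonneg (Finset.subset_univ _) fun j _ _ => hg j

lemma euclid_norm {m : ℕ} (y : Fin m → ℝ) :
    ‖(WithLp.equiv 2 (Fin m → ℝ)).symm y‖ = Real.sqrt (∑ i, y i ^ 2) := by
  rw [EuclideanSpace.norm_eq]
  exact congrArg Real.sqrt (Finset.sum_congr rfl fun i _ => by
    simp [Real.norm_eq_abs, sq_abs])

lemma diaglike_mulVec {p q : ℕ} (f : Fin p → ℝ) (x : Fin q → ℝ) (i : Fin p) :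
    ((Matrix.of fun (i : Fin p) (j : Fin q) => if (i : ℕ) = (j : ℕ) then f i else 0) *ᵥ x) i
      = if h : (i : ℕ) < q then f i * x ⟨i, h⟩ else 0 := by
  simp only [Matrix.mulVec, dotProduct, Matrix.of_apply]
  by_cases h : (i : ℕ) < q
  · rw [dif_pos h, Finset.sum_eq_single (⟨(i : ℕ), h⟩ : Fin q)]
    · simp
    · intro b _ hb
      rw [if_neg, zero_mul]
      intro he; exact hb (by ext; simp [← he])
    · simp
  · rw [dif_neg h]
    refine Finset.sum_eq_zero fun j _ => ?_
    rw [if_neg, zero_mul]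
    intro he; exact h (he ▸ j.isLt)

lemma sumsq_mulVec_orth {p : ℕ} (U : Matrix (Fin p) (Fin p) ℝ) (hU : Uᵀ * U = 1)
    (w : Fin p → ℝ) : ∑ i, (U *ᵥ w) i ^ 2 = ∑ i, w i ^ 2 := by
  have h1 : ∑ i, (U *ᵥ w) i ^ 2 = (U *ᵥ w) ⬝ᵥ (U *ᵥ w) := by
    simp [dotProduct, sq]
  have h2 : ∑ i, w i ^ 2 = w ⬝ᵥ w := by simp [dotProduct, sq]
  rw [h1, h2, Matrix.dotProduct_mulVec, ← Matrix.mulVec_transpose,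
    Matrix.mulVec_mulVec, hU, Matrix.one_mulVec]

lemma specNorm_diaglike_le {p q : ℕ} (f : Fin p → ℝ) (c : ℝ) (hc : 0 ≤ c)
    (hf : ∀ i, |f i| ≤ c) :
    ‖(Matrix.of fun (i : Fin p) (j : Fin q) => if (i : ℕ) = (j : ℕ) then f i else 0)‖ ≤ c := by
  set D := (Matrix.of fun (i : Fin p) (j : Fin q) => if (i : ℕ) = (j : ℕ) then f i else 0)
  rw [Matrix.l2_opNorm_def]
  refine ContinuousLinearMap.opNorm_le_bound _ hc fun v => ?_
  set x : Fin q → ℝ := (WithLp.equiv 2 (Fin q → ℝ)) v with hx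
  have hv : v = (WithLp.equiv 2 (Fin q → ℝ)).symm x := rfl
  rw [hv]
  show ‖Matrix.toEuclideanLin D ((WithLp.equiv 2 (Fin q → ℝ)).symm x)‖ ≤
    c * ‖(WithLp.equiv 2 (Fin q → ℝ)).symm x‖
  show ‖(WithLp.equiv 2 (Fin p → ℝ)).symm (D *ᵥ x)‖ ≤ c * ‖(WithLp.equiv 2 (Fin q → ℝ)).symm x‖
  rw [euclid_norm, euclid_norm]
  rw [← Real.sqrt_sq hc, ← Real.sqrt_mul (sq_nonneg c)]
  refine Real.sqrt_le_sqrt ?_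
  have key : ∀ i : Fin p, (D *ᵥ x) i ^ 2 ≤
      (if h : (i : ℕ) < q then c ^ 2 * x ⟨i, h⟩ ^ 2 else 0) := by
    intro i
    rw [diaglike_mulVec]
    by_cases h : (i : ℕ) < q
    · rw [dif_pos h, dif_pos h, mul_pow]
      have h2 : f i ^ 2 ≤ c ^ 2 := by
        rw [← sq_abs]; exact pow_le_pow_left₀ (abs_nonneg _) (hf i) 2
      nlinarith [sq_nonneg (x ⟨i, h⟩)]
    · simp [h]
  calc ∑ i, (D *ᵥ x) i ^ 2
      ≤ ∑ i : Fin p, (if h : (i : ℕ) < q then c ^ 2 * x ⟨i, h⟩ ^ 2 else 0) :=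
        Finset.sum_le_sum fun i _ => key i
    _ ≤ c ^ 2 * ∑ j, x j ^ 2 := by
        rw [Finset.mul_sum]
        by_cases hpq : p ≤ q
        · calc ∑ i : Fin p, (if h : (i : ℕ) < q then c ^ 2 * x ⟨i, h⟩ ^ 2 else 0)
              = ∑ i : Fin p, c ^ 2 * x (Fin.castLE hpq i) ^ 2 := by
                refine Finset.sum_congr rfl fun i _ => ?_
                rw [dif_pos (lt_of_lt_of_le i.isLt hpq)]
                rfl
            _ ≤ ∑ j : Fin q, c ^ 2 * x j ^ 2 := by
                have := sum_le_sum_castLE hpq (fun j => c ^ 2 * x j ^ 2)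
                  (fun j => by positivity)
                exact this
        · push_neg at hpq
          have hqp : q ≤ p := le_of_lt hpq
          rw [sum_eq_sum_castLE hqp
            (fun i : Fin p => (if h : (i : ℕ) < q then c ^ 2 * x ⟨i, h⟩ ^ 2 else 0))
            (fun j hj => dif_neg hj)]
          refine le_of_eq (Finset.sum_congr rfl fun k _ => ?_)
          rw [dif_pos (show ((Fin.castLE hqp k : Fin p) : ℕ) < q from k.isLt)]
          rfl

lemma eckart_young {d n r : ℕ} (A Xt : Matrix (Fin d) (Fin n) ℝ) (sXt : SVDData d n Xt)
    (hrank : A.rank ≤ r) (hd : r < d) (hn : r < n) : sXt.s r ≤ ‖Xt - A‖ := by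
  obtain ⟨U, V, s, orthU, orthV, snn, santi, heq⟩ := sXt
  set Sg := diagDec d n s with hSg
  set E : Matrix (Fin n) (Fin (r + 1)) ℝ :=
    Matrix.of fun j k => if (j : ℕ) = (k : ℕ) then (1 : ℝ) else 0 with hE
  set C := A * V * E with hC
  have hCrank : C.rank ≤ r :=
    le_trans (Matrix.rank_mul_le_left _ _) (le_trans (Matrix.rank_mul_le_left _ _) hrank)
  have hker : LinearMap.ker C.mulVecLin ≠ ⊥ := by
    intro hbot
    have h1 := LinearMap.finrank_range_add_finrank_ker C.mulVecLin
    rw [hbot, finrank_bot, add_zero] at h1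
    have h2 : C.rank = r + 1 := by
      rw [Matrix.rank, h1, Module.finrank_fintype_fun_eq_card, Fintype.card_fin]
    omega
  obtain ⟨x, hxker, hx0⟩ := (Submodule.ne_bot_iff _).mp hker
  have hx : C *ᵥ x = 0 := hxker
  set c : Fin n → ℝ := fun j => if h : (j : ℕ) < r + 1 then x ⟨(j : ℕ), h⟩ else 0 with hc
  have hEx : E *ᵥ x = c := by
    funext j
    rw [hE]
    rw [diaglike_mulVec (fun _ => (1 : ℝ)) x j]
    by_cases h : (j : ℕ) < r + 1
    · rw [dif_pos h, hc]; simp [h]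
    · rw [dif_neg h, hc]; simp [h]
  have hrn : r + 1 ≤ n := hn
  have hrd : r + 1 ≤ d := hd
  have hAc : A *ᵥ (V *ᵥ c) = 0 := by
    rw [← hEx, Matrix.mulVec_mulVec, Matrix.mulVec_mulVec, ← hC, hx]
  set w := V *ᵥ c with hw
  have hXtw : (Xt - A) *ᵥ w = U *ᵥ (Sg *ᵥ c) := by
    rw [Matrix.sub_mulVec, hw, hAc, sub_zero, heq, Matrix.mulVec_mulVec]
    have : U * Sg * Vᵀ * V = U * Sg := by
      rw [Matrix.mul_assoc, orthV, Matrix.mul_one]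
    rw [this, ← Matrix.mulVec_mulVec]
  have q1 : ∑ i, ((Xt - A) *ᵥ w) i ^ 2 = ∑ i, (Sg *ᵥ c) i ^ 2 := by
    rw [hXtw]; exact sumsq_mulVec_orth U orthU _
  have q2 : ∑ j, w j ^ 2 = ∑ j, c j ^ 2 := sumsq_mulVec_orth V orthV c
  have q3 : ∑ j, c j ^ 2 = ∑ k : Fin (r + 1), x k ^ 2 := by
    rw [sum_eq_sum_castLE hrn (fun j => c j ^ 2)
      (fun j hj => by rw [hc]; dsimp only; rw [dif_neg hj]; norm_num)]
    refine Finset.sum_congr rfl fun k _ => ?_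
    rw [hc]
    simp only [Fin.coe_castLE]
    rw [dif_pos k.isLt]
  have q4 : s r ^ 2 * ∑ k : Fin (r + 1), x k ^ 2 ≤ ∑ i, (Sg *ᵥ c) i ^ 2 := by
    have step : ∀ k : Fin (r + 1), (Sg *ᵥ c) (Fin.castLE hrd k) = s k * x k := by
      intro k
      rw [hSg, diagDec]
      rw [diaglike_mulVec (fun i : Fin d => s (i : ℕ)) c (Fin.castLE hrd k)]
      have hkn : ((Fin.castLE hrd k : Fin d) : ℕ) < n := lt_of_lt_of_le k.isLt hrn
      rw [dif_pos hkn, hc]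
      simp only [Fin.coe_castLE]
      rw [dif_pos k.isLt]
    calc s r ^ 2 * ∑ k : Fin (r + 1), x k ^ 2
        = ∑ k : Fin (r + 1), s r ^ 2 * x k ^ 2 := Finset.mul_sum _ _ _
      _ ≤ ∑ k : Fin (r + 1), (Sg *ᵥ c) (Fin.castLE hrd k) ^ 2 := by
          refine Finset.sum_le_sum fun k _ => ?_
          rw [step k, mul_pow]
          have h1 : s r ≤ s (k : ℕ) := santi _ _ (Nat.lt_succ_iff.mp k.isLt)
          have h2 : 0 ≤ s r := snn r
          exact mul_le_mul_of_nonneg_right (pow_le_pow_left₀ h2 h1 2) (sq_nonneg _)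
      _ ≤ ∑ i, (Sg *ᵥ c) i ^ 2 :=
          sum_le_sum_castLE hrd _ (fun i => sq_nonneg _)
  have hop := Matrix.l2_opNorm_mulVec (Xt - A) ((WithLp.equiv 2 (Fin n → ℝ)).symm w)
  have hlhs : ‖(EuclideanSpace.equiv (Fin d) ℝ).symm
      ((Xt - A) *ᵥ ((WithLp.equiv 2 (Fin n → ℝ)).symm w))‖
      = Real.sqrt (∑ i, ((Xt - A) *ᵥ w) i ^ 2) := euclid_norm _
  have hrhs : ‖(WithLp.equiv 2 (Fin n → ℝ)).symm w‖ = Real.sqrt (∑ j, w j ^ 2) := euclid_norm w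
  rw [hlhs, hrhs] at hop
  have hS : (0 : ℝ) < ∑ k : Fin (r + 1), x k ^ 2 := by
    obtain ⟨k, hk⟩ := Function.ne_iff.mp hx0
    exact Finset.sum_pos' (fun k _ => sq_nonneg _)
      ⟨k, Finset.mem_univ k, lt_of_le_of_ne (sq_nonneg _) (Ne.symm (pow_ne_zero 2 hk))⟩
  rw [q1, q2, q3] at hop
  have hlow : s r * Real.sqrt (∑ k : Fin (r + 1), x k ^ 2) ≤
      Real.sqrt (∑ i, (Sg *ᵥ c) i ^ 2) := by
    have := Real.sqrt_le_sqrt q4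
    rwa [Real.sqrt_mul (sq_nonneg _), Real.sqrt_sq (snn r)] at this
  have hsq : (0 : ℝ) < Real.sqrt (∑ k : Fin (r + 1), x k ^ 2) := Real.sqrt_pos.mpr hS
  have hfin := le_trans hlow hop
  have final : s r ≤ ‖Xt - A‖ := by
    rw [mul_comm (s r), mul_comm ‖Xt - A‖] at hfin
    exact le_of_mul_le_mul_left hfin hsq
  exact final

lemma rank_sub_le' {d n : ℕ} (A B : Matrix (Fin d) (Fin n) ℝ) :
    (A - B).rank ≤ A.rank + B.rank := by
  have hle : LinearMap.range (A - B).mulVecLin ≤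
      LinearMap.range A.mulVecLin ⊔ LinearMap.range B.mulVecLin := by
    rintro y ⟨x, rfl⟩
    have : (A - B).mulVecLin x = A *ᵥ x - B *ᵥ x := by
      simp [Matrix.mulVecLin_apply, Matrix.sub_mulVec]
    rw [this]
    exact Submodule.sub_mem _ (Submodule.mem_sup_left ⟨x, rfl⟩)
      (Submodule.mem_sup_right ⟨x, rfl⟩)
  calc (A - B).rank ≤ Module.finrank ℝ
        ↥(LinearMap.range A.mulVecLin ⊔ LinearMap.range B.mulVecLin) :=
        Submodule.finrank_mono hle
    _ ≤ A.rank + B.rank := Submodule.finrank_add_le_finrank_add_finrank _ _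

lemma frobNorm_le_sqrt_rank {p q k : ℕ} (M : Matrix (Fin p) (Fin q) ℝ)
    (hrank : M.rank ≤ k) : frobNorm M ≤ Real.sqrt k * ‖M‖ := by
  classical
  set B := Mᵀ * M with hB
  have hPSD : B.PosSemidef := by
    have := Matrix.posSemidef_conjTranspose_mul_self M
    rwa [Matrix.conjTranspose_eq_transpose_of_trivial] at this
  have hH : B.IsHermitian := hPSD.1
  have htr : ∑ i, ∑ j, M i j ^ 2 = B.trace := by
    rw [Matrix.trace]
    rw [Finset.sum_comm]
    refine Finset.sum_congr rfl fun j _ => ?_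
    simp [Matrix.diag, hB, Matrix.mul_apply, sq]
  have htr2 : B.trace = ∑ i, hH.eigenvalues i := by
    conv_lhs => rw [hH.spectral_theorem]
    rw [Unitary.conjStarAlgAut_apply, Matrix.trace_mul_cycle]
    have hW : (star (hH.eigenvectorUnitary : Matrix (Fin q) (Fin q) ℝ)) *
        (hH.eigenvectorUnitary : Matrix (Fin q) (Fin q) ℝ) = 1 :=
      Unitary.coe_star_mul_self hH.eigenvectorUnitary
    rw [hW, Matrix.one_mul, Matrix.trace_diagonal]
    simp
  have heig : ∀ i, hH.eigenvalues i ≤ ‖M‖ ^ 2 := by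
    intro i
    have hBv := hH.mulVec_eigenvectorBasis i
    set y : Fin q → ℝ := ⇑(hH.eigenvectorBasis i) with hy
    have hyy : ∑ j, y j ^ 2 = 1 := by
      have hnv : ‖hH.eigenvectorBasis i‖ = 1 := hH.eigenvectorBasis.orthonormal.1 i
      rw [EuclideanSpace.norm_eq] at hnv
      have h2 := congrArg (· ^ 2) hnv
      simp only [one_pow] at h2
      rw [Real.sq_sqrt (Finset.sum_nonneg fun _ _ => sq_nonneg _)] at h2
      simpa [Real.norm_eq_abs, sq_abs] using h2
    have hval : ∑ i', (M *ᵥ y) i' ^ 2 = hH.eigenvalues i := by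
      calc ∑ i', (M *ᵥ y) i' ^ 2 = (M *ᵥ y) ⬝ᵥ (M *ᵥ y) := by
            simp [dotProduct, sq]
        _ = y ⬝ᵥ (B *ᵥ y) := by
            symm
            rw [hB, ← Matrix.mulVec_mulVec, Matrix.dotProduct_mulVec,
              Matrix.vecMul_transpose]
        _ = y ⬝ᵥ (hH.eigenvalues i • y) := by rw [hBv]
        _ = hH.eigenvalues i * ∑ j, y j ^ 2 := by
            simp [dotProduct, Finset.mul_sum, sq]
            ring_nf
            refine Finset.sum_congr rfl fun j _ => by ring
        _ = hH.eigenvalues i := by rw [hyy, mul_one]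
    have hopn' : Real.sqrt (∑ i', (M *ᵥ y) i' ^ 2) ≤ ‖M‖ := by
      have h1 := Matrix.l2_opNorm_mulVec M (hH.eigenvectorBasis i)
      rw [hH.eigenvectorBasis.orthonormal.1 i, mul_one] at h1
      calc Real.sqrt (∑ i', (M *ᵥ y) i' ^ 2)
          = ‖(EuclideanSpace.equiv (Fin p) ℝ).symm (M *ᵥ y)‖ := (euclid_norm _).symm
        _ ≤ ‖M‖ := h1
    have h0 : (0 : ℝ) ≤ ∑ i', (M *ᵥ y) i' ^ 2 := Finset.sum_nonneg fun _ _ => sq_nonneg _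
    calc hH.eigenvalues i = ∑ i', (M *ᵥ y) i' ^ 2 := hval.symm
      _ = Real.sqrt (∑ i', (M *ᵥ y) i' ^ 2) ^ 2 := (Real.sq_sqrt h0).symm
      _ ≤ ‖M‖ ^ 2 := pow_le_pow_left₀ (Real.sqrt_nonneg _) hopn' 2
  have hcard : (Finset.univ.filter fun i => hH.eigenvalues i ≠ 0).card = M.rank := by
    have h2 : B.rank = M.rank := Matrix.rank_transpose_mul_self M
    rw [← h2, hH.rank_eq_card_non_zero_eigs, Fintype.card_subtype]
  have hsum_le : ∑ i, hH.eigenvalues i ≤ (k : ℝ) * ‖M‖ ^ 2 := by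
    have h1 : ∑ i, hH.eigenvalues i
        = ∑ i ∈ Finset.univ.filter (fun i => hH.eigenvalues i ≠ 0), hH.eigenvalues i := by
      refine (Finset.sum_filter_of_ne fun i _ h => h).symm
    rw [h1]
    calc ∑ i ∈ Finset.univ.filter (fun i => hH.eigenvalues i ≠ 0), hH.eigenvalues i
        ≤ ∑ _i ∈ Finset.univ.filter (fun i => hH.eigenvalues i ≠ 0), ‖M‖ ^ 2 :=
          Finset.sum_le_sum fun i _ => heig i
      _ = ((Finset.univ.filter fun i => hH.eigenvalues i ≠ 0).card : ℝ) * ‖M‖ ^ 2 := by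
          rw [Finset.sum_const, nsmul_eq_mul]
      _ ≤ (k : ℝ) * ‖M‖ ^ 2 := by
          have : ((Finset.univ.filter fun i => hH.eigenvalues i ≠ 0).card : ℝ) ≤ (k : ℝ) := by
            exact_mod_cast hcard ▸ hrank
          exact mul_le_mul_of_nonneg_right this (sq_nonneg _)
  rw [frobNorm, htr, htr2]
  calc Real.sqrt (∑ i, hH.eigenvalues i) ≤ Real.sqrt ((k : ℝ) * ‖M‖ ^ 2) :=
        Real.sqrt_le_sqrt hsum_le
    _ = Real.sqrt k * ‖M‖ := by
        rw [Real.sqrt_mul (Nat.cast_nonneg k), Real.sqrt_sq (norm_nonneg M)]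

lemma rank_trunc_le {d n : ℕ} {Xt : Matrix (Fin d) (Fin n) ℝ} (sXt : SVDData d n Xt) (r : ℕ) :
    (sXt.trunc r).rank ≤ r := by
  classical
  set P : Matrix (Fin d) (Fin r) ℝ :=
    Matrix.of fun i k => if (i : ℕ) = (k : ℕ) then sXt.s (i : ℕ) else 0 with hP
  set Q : Matrix (Fin r) (Fin n) ℝ :=
    Matrix.of fun k j => if (k : ℕ) = (j : ℕ) then (1 : ℝ) else 0 with hQ
  have hfac : diagTrunc d n sXt.s r = P * Q := by
    ext i j
    rw [Matrix.mul_apply, diagTrunc]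
    simp only [Matrix.of_apply, hP, hQ]
    by_cases h1 : (i : ℕ) < r
    · rw [Finset.sum_eq_single (⟨(i : ℕ), h1⟩ : Fin r)]
      · by_cases h2 : (i : ℕ) = (j : ℕ)
        · rw [if_pos ⟨h2, h1⟩]; simp [h2]
        · simp [h1, h2]
      · intro b _ hb
        rw [if_neg, zero_mul]
        intro he; exact hb (by ext; simp [← he])
      · simp
    · rw [if_neg (fun hand => h1 hand.2)]
      refine (Finset.sum_eq_zero fun b _ => ?_).symm
      rw [if_neg, zero_mul]
      intro he; exact h1 (he ▸ b.isLt)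
  calc (sXt.trunc r).rank
      ≤ (sXt.U * diagTrunc d n sXt.s r).rank := Matrix.rank_mul_le_left _ _
    _ ≤ (diagTrunc d n sXt.s r).rank := Matrix.rank_mul_le_right _ _
    _ = (P * Q).rank := by rw [hfac]
    _ ≤ Q.rank := Matrix.rank_mul_le_right _ _
    _ ≤ r := le_trans (Matrix.rank_le_card_height Q) (by simp)

end Auxiliary

/-- Proposition 2 (noisy parameter recovery): let X = A + R with A of rank at most r, let X̃
satisfy ‖X̃ − X‖₂ ≤ ε·‖X‖_F with ε ≥ 0, and let X̂ = X̃_r be the best rank-r approximation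
(truncated SVD) of X̃.  Then ‖X̂ − A‖₂ ≤ 2‖R‖₂ + 2ε‖X‖_F and consequently
‖X̂ − A‖_F ≤ sqrt(8r)·(‖R‖₂ + ε‖X‖_F). -/
theorem noisy_parameter_recovery
    {d n : ℕ} (A R X Xt : Matrix (Fin d) (Fin n) ℝ) (r : ℕ)
    (hX : X = A + R) (hrank : A.rank ≤ r)
    (ε : ℝ) (hε : 0 ≤ ε) (h : specNorm (Xt - X) ≤ ε * frobNorm X)
    (sXt : SVDData d n Xt) :
    specNorm (sXt.trunc r - A) ≤ 2 * specNorm R + 2 * ε * frobNorm X ∧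
      frobNorm (sXt.trunc r - A) ≤
        Real.sqrt (8 * r) * (specNorm R + ε * frobNorm X) := by
  classical
  open scoped Matrix.Norms.L2Operator in
  have hXA : X - A = R := by rw [hX]; exact add_sub_cancel_left A R
  have hFnn : 0 ≤ frobNorm X := Real.sqrt_nonneg _
  have hRnn : 0 ≤ specNorm R := by rw [specNorm_eq_l2norm]; exact norm_nonneg _
  set T := diagTrunc d n sXt.s r with hT
  set Sg := diagDec d n sXt.s with hSg
  have hV' : sXt.Vᵀᵀ * sXt.Vᵀ = 1 := by
    rw [Matrix.transpose_transpose]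
    exact mul_eq_one_comm.mp sXt.orthV
  have hUDV_le : ∀ D : Matrix (Fin d) (Fin n) ℝ, ‖sXt.U * D * sXt.Vᵀ‖ ≤ ‖D‖ := by
    intro D
    calc ‖sXt.U * D * sXt.Vᵀ‖ ≤ ‖sXt.U * D‖ * ‖sXt.Vᵀ‖ := Matrix.l2_opNorm_mul _ _
      _ ≤ ‖sXt.U * D‖ * 1 :=
          mul_le_mul_of_nonneg_left (l2norm_orth_le _ hV') (norm_nonneg _)
      _ = ‖sXt.U * D‖ := mul_one _
      _ ≤ ‖sXt.U‖ * ‖D‖ := Matrix.l2_opNorm_mul _ _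
      _ ≤ 1 * ‖D‖ :=
          mul_le_mul_of_nonneg_right (l2norm_orth_le _ sXt.orthU) (norm_nonneg _)
      _ = ‖D‖ := one_mul _
  have htrunc_sub : sXt.trunc r - Xt = sXt.U * (T - Sg) * sXt.Vᵀ := by
    rw [SVDData.trunc, Matrix.mul_sub, Matrix.sub_mul]
    exact congrArg (fun M => sXt.U * T * sXt.Vᵀ - M) sXt.eq
  have hTS : ‖T - Sg‖ ≤ sXt.s r := by
    have hTSeq : T - Sg = Matrix.of fun (i : Fin d) (j : Fin n) =>
        if (i : ℕ) = (j : ℕ) then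
          ((if (i : ℕ) < r then sXt.s (i : ℕ) else 0) - sXt.s (i : ℕ)) else 0 := by
      ext i j
      simp only [Matrix.sub_apply, hT, hSg, diagTrunc, diagDec, Matrix.of_apply]
      by_cases h1 : (i : ℕ) = (j : ℕ) <;> by_cases h2 : (i : ℕ) < r <;>
        simp [h1, h2]
    rw [hTSeq]
    refine specNorm_diaglike_le _ _ (sXt.nonneg r) fun i => ?_
    by_cases h2 : (i : ℕ) < r
    · simp [h2, sXt.nonneg r]
    · push_neg at h2
      rw [if_neg (by omega)]
      rw [zero_sub, abs_neg, abs_of_nonneg (sXt.nonneg _)]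
      exact sXt.anti _ _ h2
  have hEY : ‖sXt.trunc r - Xt‖ ≤ ‖Xt - A‖ := by
    by_cases hcase : r < d ∧ r < n
    · calc ‖sXt.trunc r - Xt‖ = ‖sXt.U * (T - Sg) * sXt.Vᵀ‖ := by rw [htrunc_sub]
        _ ≤ ‖T - Sg‖ := hUDV_le _
        _ ≤ sXt.s r := hTS
        _ ≤ ‖Xt - A‖ := eckart_young A Xt sXt hrank hcase.1 hcase.2
    · have hTeq : T = Sg := by
        ext i j
        simp only [hT, hSg, diagTrunc, diagDec, Matrix.of_apply]
        by_cases h1 : (i : ℕ) = (j : ℕ)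
        · have : (i : ℕ) < r := by
            rcases not_and_or.mp hcase with hd | hn
            · omega
            · have := i.isLt
              have hj := j.isLt
              omega
          have h3 : (j : ℕ) < r := h1 ▸ this
          simp [h1, this, h3]
        · simp [h1]
      have : sXt.trunc r - Xt = 0 := by
        rw [htrunc_sub, hTeq, sub_self, Matrix.mul_zero, Matrix.zero_mul]
      rw [this, norm_zero]
      exact norm_nonneg _
  have hXtA : ‖Xt - A‖ ≤ specNorm R + ε * frobNorm X := by
    calc ‖Xt - A‖ = ‖(Xt - X) + (X - A)‖ := by rw [sub_add_sub_cancel]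
      _ ≤ ‖Xt - X‖ + ‖X - A‖ := norm_add_le _ _
      _ ≤ ε * frobNorm X + specNorm R := by
          refine add_le_add ?_ ?_
          · rw [← specNorm_eq_l2norm]; exact h
          · rw [hXA, ← specNorm_eq_l2norm]
      _ = specNorm R + ε * frobNorm X := by ring
  have htri : ‖sXt.trunc r - A‖ ≤ ‖sXt.trunc r - Xt‖ + ‖Xt - A‖ := by
    calc ‖sXt.trunc r - A‖ = ‖(sXt.trunc r - Xt) + (Xt - A)‖ := by rw [sub_add_sub_cancel]
      _ ≤ _ := norm_add_le _ _
  have part1 : specNorm (sXt.trunc r - A) ≤ 2 * specNorm R + 2 * ε * frobNorm X := by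
    rw [specNorm_eq_l2norm]
    calc ‖sXt.trunc r - A‖ ≤ 2 * ‖Xt - A‖ := by linarith
      _ ≤ 2 * (specNorm R + ε * frobNorm X) := by linarith
      _ = 2 * specNorm R + 2 * ε * frobNorm X := by ring
  have hrk : (sXt.trunc r - A).rank ≤ 2 * r := by
    calc (sXt.trunc r - A).rank ≤ (sXt.trunc r).rank + A.rank := rank_sub_le' _ _
      _ ≤ r + r := add_le_add (rank_trunc_le sXt r) hrank
      _ = 2 * r := by ring
  have part2 : frobNorm (sXt.trunc r - A) ≤
      Real.sqrt (8 * r) * (specNorm R + ε * frobNorm X) := by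
    have hfrob := frobNorm_le_sqrt_rank (sXt.trunc r - A) hrk
    have hsqrt8 : Real.sqrt (8 * (r : ℝ)) = 2 * Real.sqrt ((2 * r : ℕ) : ℝ) := by
      push_cast
      rw [show (8 : ℝ) * r = 4 * (2 * r) by ring,
        Real.sqrt_mul (by norm_num : (0 : ℝ) ≤ 4),
        show (4 : ℝ) = 2 ^ 2 by norm_num, Real.sqrt_sq (by norm_num : (0 : ℝ) ≤ 2)]
    calc frobNorm (sXt.trunc r - A)
        ≤ Real.sqrt ((2 * r : ℕ) : ℝ) * ‖sXt.trunc r - A‖ := hfrob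
      _ ≤ Real.sqrt ((2 * r : ℕ) : ℝ) * (2 * specNorm R + 2 * ε * frobNorm X) := by
          refine mul_le_mul_of_nonneg_left ?_ (Real.sqrt_nonneg _)
          rw [← specNorm_eq_l2norm]
          exact part1
      _ = Real.sqrt (8 * r) * (specNorm R + ε * frobNorm X) := by
          rw [hsqrt8]; ring
  exact ⟨part1, part2⟩
end
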